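/- In any finite ring R of order 2ⁿ in which a² ∈ 2R for all a ∈ R, every element is nilpotent (R is a nil ring). -/
import Mathlib


/-- Iterated product: npow' a n = a^(n+1) in a non-unital ring. -/
def npow' {R : Type*} [NonUnitalRing R] (a : R) : ℕ → R
  | 0 => a
  | n + 1 => npow' a n * a

lemma npow'_add {R : Type*} [NonUnitalRing R] (a : R) (m n : ℕ) :
    npow' a (m + n + 1) = npow' a m * npow' a n := by
  induction n with
  | zero => rfl
  | succ n ih =>
    show npow' a (m + n + 1) * a = _
    rw [ih, mul_assoc]
    rfl

/-- Every finite ring of order 2ⁿ with a² ∈ 2R for all a is nil. -/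
theorem stmt_19 (R : Type*) [NonUnitalRing R] [Fintype R]
    (hcard : ∃ n : ℕ, 0 < n ∧ Fintype.card R = 2 ^ n)
    (hsq : ∀ a : R, ∃ r : R, a * a = r + r) :
    ∀ a : R, ∃ m : ℕ, npow' a m = 0 := by
  obtain ⟨n, hn, hc⟩ := hcard
  intro a
  have key : ∀ k : ℕ, ∃ r : R, npow' a (2 ^ k - 1) = 2 ^ k • r := by
    intro k
    induction k with
    | zero => exact ⟨a, (one_smul ℕ a).symm⟩
    | succ k ih =>
      obtain ⟨r, hr⟩ := ih
      obtain ⟨s, hs⟩ := hsq r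
      have h1 : (1:ℕ) ≤ 2 ^ k := Nat.one_le_two_pow
      have hidx : 2 ^ (k + 1) - 1 = (2 ^ k - 1) + (2 ^ k - 1) + 1 := by
        rw [pow_succ]; omega
      refine ⟨2 ^ k • s, ?_⟩
      rw [hidx, npow'_add, hr, smul_mul_smul_comm, hs, ← two_smul ℕ s,
        smul_smul, smul_smul]
      congr 1
      ring
  obtain ⟨r, hr⟩ := key n
  refine ⟨2 ^ n - 1, ?_⟩
  rw [hr, ← hc, card_nsmul_eq_zero]
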